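/- The self-membership of the co-Russell set is independent in BST: letting α := ∃y∀x(x∈y ↔ x∈x) and σ := ∀y(∀x(x∈y ↔ x∈x) → y∈y), both BST ∪ {α, σ} and BST ∪ {α, ¬σ} are satisfiable. -/

import Mathlib

open FirstOrder FirstOrder.Language

namespace SetParadox

/-- The language with a single binary relation symbol `∈`. -/
def L : Language := ⟨fun _ => Empty, fun n => match n with | 2 => Unit | _ => Empty⟩

/-- The membership relation symbol. -/
def memRel : L.Relations 2 := Unit.unit

/-- `memF t₁ t₂` is the atomic formula `t₁ ∈ t₂`. -/
def memF {n : ℕ} (t₁ t₂ : L.Term (Empty ⊕ Fin n)) : L.BoundedFormula Empty n :=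
  memRel.boundedFormula₂ t₁ t₂

/-- Extensionality: `∀y∀z(∀x(x∈y ↔ x∈z) → y=z)`. -/
def extAx : L.Sentence :=
  ∀' ∀' ((∀' (memF (&2) (&0) ⇔ memF (&2) (&1))) ⟹ ((&0) =' (&1)))

/-- Basic set theory: the theory whose only axiom is extensionality. -/
def BST : L.Theory := {extAx}

/-- The UC-instance `∃y∀x(x∈y ↔ φ(x))` determined by a formula `φ` with one free
variable `x` (so that `y` does not occur free in `φ`). -/
def UCinst (φ : L.BoundedFormula Empty 1) : L.Sentence :=
  ∃' ∀' (memF (&1) (&0) ⇔ φ.liftAt 1 0)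


/-- `α := ∃y∀x(x∈y ↔ x∈x)`: the co-Russell set exists. -/
def coRussellExists : L.Sentence := UCinst (memF (&0) (&0))

/-- `σ := ∀y(∀x(x∈y ↔ x∈x) → y∈y)`: the co-Russell set is a member of itself. -/
def coRussellSelfMem : L.Sentence :=
  ∀' ((∀' (memF (&1) (&0) ⇔ memF (&1) (&1))) ⟹ memF (&0) (&0))


/-- One-element structure where membership is everywhere `b`. -/
def strOf (b : Prop) : L.Structure Unit where
  funMap {_} f := f.elim
  RelMap {n} r _ := match n, r with
    | 2, _ => b

theorem realize_of (b : Prop) :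
    letI := strOf b
    extAx.Realize Unit ∧ coRussellExists.Realize Unit ∧
    (coRussellSelfMem.Realize Unit ↔ b) := by
  simp [extAx, coRussellExists, coRussellSelfMem, UCinst, memF, Sentence.Realize,
    Formula.Realize, BoundedFormula.realize_rel₂,
    BoundedFormula.realize_iff, BoundedFormula.realize_liftAt,
    BoundedFormula.realize_rel, Term.realize_var, strOf]
  exact ⟨fun h => h (), fun h _ => h⟩

/-- The self-membership of the co-Russell set is independent in `BST`: both
`BST ∪ {α, σ}` and `BST ∪ {α, ¬σ}` are satisfiable. -/
theorem coRussell_selfMem_independent :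
    (BST ∪ {coRussellExists, coRussellSelfMem}).IsSatisfiable ∧
    (BST ∪ {coRussellExists, ∼coRussellSelfMem}).IsSatisfiable := by
  constructor
  · letI := strOf True
    obtain ⟨h1, h2, h3⟩ := realize_of True
    haveI : (BST ∪ {coRussellExists, coRussellSelfMem}).Model Unit := by
      refine ⟨fun {φ} hφ => ?_⟩
      rcases hφ with hφ | hφ | hφ
      · rw [BST, Set.mem_singleton_iff] at hφ; subst hφ; exact h1
      · subst hφ; exact h2
      · rw [Set.mem_singleton_iff] at hφ; subst hφ; exact h3.mpr trivial
    exact Theory.Model.isSatisfiable Unit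
  · letI := strOf False
    obtain ⟨h1, h2, h3⟩ := realize_of False
    haveI : (BST ∪ {coRussellExists, ∼coRussellSelfMem}).Model Unit := by
      refine ⟨fun {φ} hφ => ?_⟩
      rcases hφ with hφ | hφ | hφ
      · rw [BST, Set.mem_singleton_iff] at hφ; subst hφ; exact h1
      · subst hφ; exact h2
      · rw [Set.mem_singleton_iff] at hφ; subst hφ
        exact fun h => h3.mp h
    exact Theory.Model.isSatisfiable Unit

end SetParadox
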